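/- In any LC-NSB evacuation run on an initial loopless multigraph G(0) on n ≥ 2 vertices, for every frame index k′ ≥ 0: if the maximum degree at the beginning of the frame satisfies Δ(3k′) ≥ 2, then the maximum degree decreases by at least two by the end of the frame, i.e., Δ(3k′ + 3) ≤ Δ(3k′) − 2. -/

import Mathlib

open scoped Classical

namespace NSBPaper

variable {V : Type} [Fintype V] [DecidableEq V]

/-- Degree of a vertex in a loopless multigraph given by multiplicity function `w`. -/
def deg (w : V → V → ℕ) (v : V) : ℕ := ∑ u, w v u

/-- Maximum degree of the multigraph. -/
def maxDeg (w : V → V → ℕ) : ℕ := Finset.univ.sup fun v => deg w v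

/-- The support simple graph of a multigraph: `u` and `v` are adjacent iff `u ≠ v`
and there is at least one multi-edge between them. -/
def support (w : V → V → ℕ) : SimpleGraph V where
  Adj u v := u ≠ v ∧ 1 ≤ w u v ∧ 1 ≤ w v u
  symm := ⟨fun u v h => ⟨h.1.symm, h.2.2, h.2.1⟩⟩
  loopless := ⟨fun v h => h.1 rfl⟩

/-- A set of unordered pairs `M` saturates a vertex `v` if some pair of `M` contains `v`. -/
def Saturates (M : Finset (Sym2 V)) (v : V) : Prop := ∃ e ∈ M, v ∈ e

/-- `M` is a matching of the multigraph `w`: its elements are non-loop edges of the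
support, and no two distinct elements share a vertex. -/
def IsMatching (w : V → V → ℕ) (M : Finset (Sym2 V)) : Prop :=
  (∀ e ∈ M, ¬ e.IsDiag) ∧
  (∀ u v : V, s(u, v) ∈ M → 1 ≤ w u v) ∧
  (∀ e ∈ M, ∀ f ∈ M, e ≠ f → ∀ x : V, x ∈ e → x ∉ f)

/-- `M` is a maximal matching of `w`: no pair can be added keeping it a matching. -/
def IsMaximalMatching (w : V → V → ℕ) (M : Finset (Sym2 V)) : Prop :=
  IsMatching w M ∧ ∀ e : Sym2 V, e ∉ M → ¬ IsMatching w (insert e M)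

/-- Removing a matching `M` from the multigraph `w`: the multiplicity of each pair in `M`
decreases by one. -/
def removeMatching (w : V → V → ℕ) (M : Finset (Sym2 V)) : V → V → ℕ :=
  fun u v => if s(u, v) ∈ M then w u v - 1 else w u v

/-- The subgraph of `G` induced by `Z` is bipartite: there is a set `A` such that every
edge of `G` inside `Z` joins `A` to its complement. -/
def BipartiteOn (G : SimpleGraph V) (Z : Set V) : Prop :=
  ∃ A : Set V, ∀ ⦃u v : V⦄, u ∈ Z → v ∈ Z → G.Adj u v → (u ∈ A ↔ v ∉ A)

/-- The edge multiset of `w` can be partitioned into `T` matchings. -/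
def CanEvacuate (w : V → V → ℕ) (T : ℕ) : Prop :=
  ∃ M : Fin T → Finset (Sym2 V),
    (∀ j, IsMatching w (M j)) ∧
    ∀ u v : V, (Finset.univ.filter fun j => s(u, v) ∈ M j).card = w u v

/-- The vertex-weight of a matching: the sum of the weights of its saturated vertices. -/
noncomputable def matchWeight (φ : V → ℕ) (M : Finset (Sym2 V)) : ℕ :=
  ∑ v : V, if Saturates M v then φ v else 0

/-- `Rfun M k i = 1` iff vertex `i` is saturated by the matching chosen in slot `k`. -/
noncomputable def Rfun (M : ℕ → Finset (Sym2 V)) (k : ℕ) (i : V) : ℕ :=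
  if Saturates (M k) i then 1 else 0

/-- `Ufun M k i` is `R i (k-1) * R i (k-2)` if `k ≡ 2 [MOD 3]` and `R i (k-1)` otherwise,
with `R i k = 0` for `k < 0`. -/
noncomputable def Ufun (M : ℕ → Finset (Sym2 V)) (k : ℕ) (i : V) : ℕ :=
  if k = 0 then 0
  else if k % 3 = 2 then Rfun M (k - 1) i * Rfun M (k - 2) i
  else Rfun M (k - 1) i

/-- Vertex `i` is heavy in `w`: `n * d(i) ≥ (n - 1) * Δ`. -/
def Heavy (w : V → V → ℕ) (i : V) : Prop :=
  (Fintype.card V - 1) * maxDeg w ≤ Fintype.card V * deg w i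

/-- Vertex `i` is critical in `w`: its degree is the maximum degree. -/
def Critical (w : V → V → ℕ) (i : V) : Prop := deg w i = maxDeg w

/-- The NSB weight of vertex `i`, where `u i` records whether `i` received enough
service previously. -/
noncomputable def nsbWeight (w : V → V → ℕ) (u : V → ℕ) (i : V) : ℕ :=
  if Heavy w i then deg w i * (2 - u i) else deg w i

/-- The LC-NSB weight of vertex `i`. -/
noncomputable def lcnsbWeight (w : V → V → ℕ) (u : V → ℕ) (i : V) : ℕ :=
  if Critical w i then 5 - 2 * u i
  else if Heavy w i then 4 - 2 * u i
  else 1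

/-- An NSB evacuation run on the initial multigraph `w0`: in each slot `k`, a matching
`M k` of `G k` maximizing the total NSB weight of saturated vertices is removed. -/
structure NSBRun (w0 : V → V → ℕ) where
  G : ℕ → V → V → ℕ
  M : ℕ → Finset (Sym2 V)
  init : G 0 = w0
  step : ∀ k, G (k + 1) = removeMatching (G k) (M k)
  matching : ∀ k, IsMatching (G k) (M k)
  opt : ∀ k, ∀ M' : Finset (Sym2 V), IsMatching (G k) M' →
    matchWeight (nsbWeight (G k) (Ufun M k)) M' ≤ matchWeight (nsbWeight (G k) (Ufun M k)) (M k)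

/-- An LC-NSB evacuation run on the initial multigraph `w0`. -/
structure LCNSBRun (w0 : V → V → ℕ) where
  G : ℕ → V → V → ℕ
  M : ℕ → Finset (Sym2 V)
  init : G 0 = w0
  step : ∀ k, G (k + 1) = removeMatching (G k) (M k)
  matching : ∀ k, IsMatching (G k) (M k)
  opt : ∀ k, ∀ M' : Finset (Sym2 V), IsMatching (G k) M' →
    matchWeight (lcnsbWeight (G k) (Ufun M k)) M' ≤
      matchWeight (lcnsbWeight (G k) (Ufun M k)) (M k)



section AuxLemmas
set_option linter.unusedSectionVars false
set_option linter.unusedVariables false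
-- ### basic helpers

noncomputable def satSet (M : Finset (Sym2 V)) : Finset V :=
  Finset.univ.filter fun v => Saturates M v

lemma mem_satSet {M : Finset (Sym2 V)} {v : V} : v ∈ satSet M ↔ Saturates M v := by
  simp [satSet]

lemma matchWeight_eq_sum (φ : V → ℕ) (M : Finset (Sym2 V)) :
    matchWeight φ M = ∑ v ∈ satSet M, φ v := by
  rw [matchWeight, satSet, ← Finset.sum_filter]

lemma edge_eq_of_mem {w : V → V → ℕ} {M : Finset (Sym2 V)} (hM : IsMatching w M)
    {e f : Sym2 V} (he : e ∈ M) (hf : f ∈ M) {v : V} (hv : v ∈ e) (hv' : v ∈ f) : e = f := by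
  by_contra hne
  exact hM.2.2 e he f hf hne v hv hv'

lemma partner {w : V → V → ℕ} {M : Finset (Sym2 V)} (hM : IsMatching w M) {v : V}
    (h : Saturates M v) :
    ∃ u, u ≠ v ∧ s(v, u) ∈ M ∧ ∀ e ∈ M, v ∈ e → e = s(v, u) := by
  obtain ⟨e, he, hv⟩ := h
  induction e with
  | _ a b =>
    have key : ∀ u : V, s(v, u) ∈ M → u ≠ v ∧ s(v, u) ∈ M ∧ ∀ e ∈ M, v ∈ e → e = s(v, u) := by
      intro u hu
      refine ⟨?_, hu, fun f hf hvf => edge_eq_of_mem hM hf hu hvf (Sym2.mem_mk_left _ _)⟩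
      intro huv; apply hM.1 _ hu; subst huv; exact Sym2.mk_isDiag_iff.2 rfl
    rcases Sym2.mem_iff.1 hv with rfl | rfl
    · exact ⟨b, key b he⟩
    · exact ⟨a, key a (by rwa [Sym2.eq_swap] at he)⟩

lemma not_saturates_of_mem_of_not {M : Finset (Sym2 V)} {x y u : V}
    (h : ¬ Saturates M x) : s(x, u) ∉ M := fun hm => h ⟨_, hm, Sym2.mem_mk_left _ _⟩

lemma isMatching_insert {w : V → V → ℕ} {M : Finset (Sym2 V)} (hM : IsMatching w M)
    {x y : V} (hxy : x ≠ y) (h1 : 1 ≤ w x y) (h2 : 1 ≤ w y x)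
    (hx : ¬ Saturates M x) (hy : ¬ Saturates M y) :
    IsMatching w (insert s(x, y) M) := by
  have hxyM : ∀ f ∈ M, ∀ z : V, z ∈ s(x, y) → z ∉ f := by
    intro f hf z hz hzf
    rcases Sym2.mem_iff.1 hz with rfl | rfl
    · exact hx ⟨f, hf, hzf⟩
    · exact hy ⟨f, hf, hzf⟩
  refine ⟨?_, ?_, ?_⟩
  · intro e he
    rcases Finset.mem_insert.1 he with rfl | he
    · simpa [Sym2.mk_isDiag_iff] using hxy
    · exact hM.1 e he
  · intro u v huv
    rcases Finset.mem_insert.1 huv with h | h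
    · rcases Sym2.eq_iff.1 h with ⟨rfl, rfl⟩ | ⟨rfl, rfl⟩ <;> assumption
    · exact hM.2.1 u v h
  · intro e he f hf hef z hze hzf
    rcases Finset.mem_insert.1 he with he' | he'
    · rcases Finset.mem_insert.1 hf with hf' | hf'
      · exact hef (he'.trans hf'.symm)
      · subst he'; exact hxyM f hf' z hze hzf
    · rcases Finset.mem_insert.1 hf with hf' | hf'
      · subst hf'; exact hxyM e he' z hzf hze
      · exact hM.2.2 e he' f hf' hef z hze hzf

lemma saturates_insert {M : Finset (Sym2 V)} {e : Sym2 V} {v : V} :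
    Saturates (insert e M) v ↔ v ∈ e ∨ Saturates M v := by
  constructor
  · rintro ⟨f, hf, hv⟩
    rcases Finset.mem_insert.1 hf with rfl | hf
    · exact Or.inl hv
    · exact Or.inr ⟨f, hf, hv⟩
  · rintro (hv | ⟨f, hf, hv⟩)
    · exact ⟨e, Finset.mem_insert_self _ _, hv⟩
    · exact ⟨f, Finset.mem_insert_of_mem hf, hv⟩

lemma satSet_insert {M : Finset (Sym2 V)} {x y : V} :
    satSet (insert s(x, y) M) = insert x (insert y (satSet M)) := by
  ext v
  simp only [mem_satSet, Finset.mem_insert, saturates_insert, Sym2.mem_iff]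
  tauto

lemma matchWeight_insert (φ : V → ℕ) {M : Finset (Sym2 V)} {x y : V} (hxy : x ≠ y)
    (hx : ¬ Saturates M x) (hy : ¬ Saturates M y) :
    matchWeight φ (insert s(x, y) M) = φ x + φ y + matchWeight φ M := by
  rw [matchWeight_eq_sum, matchWeight_eq_sum, satSet_insert]
  rw [Finset.sum_insert, Finset.sum_insert]
  · ring
  · exact fun h => hy (mem_satSet.1 h)
  · intro h
    rcases Finset.mem_insert.1 h with rfl | h
    · exact hxy rfl
    · exact hx (mem_satSet.1 h)


set_option linter.unusedSectionVars false
set_option linter.unusedVariables false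



lemma isMatching_subset {w : V → V → ℕ} {M N : Finset (Sym2 V)} (hM : IsMatching w M)
    (h : N ⊆ M) : IsMatching w N :=
  ⟨fun e he => hM.1 e (h he), fun u v huv => hM.2.1 u v (h huv),
    fun e he f hf hef z hze => hM.2.2 e (h he) f (h hf) hef z hze⟩

/-- The swap: remove the matched edge `{y,z}` and add `{x,y}` where `x` is exposed. -/
lemma swap_matching {w : V → V → ℕ} {M : Finset (Sym2 V)} (hM : IsMatching w M)
    {x y z : V} (hyz : s(y, z) ∈ M) (hx : ¬ Saturates M x) (hxz : x ≠ z)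
    (h1 : 1 ≤ w x y) (h2 : 1 ≤ w y x) (φ : V → ℕ) :
    IsMatching w (insert s(x, y) (M.erase s(y, z))) ∧
    matchWeight φ (insert s(x, y) (M.erase s(y, z))) + φ z = matchWeight φ M + φ x := by
  have hxy : x ≠ y := fun h => hx (h ▸ ⟨_, hyz, Sym2.mem_mk_left _ _⟩)
  have hyz' : y ≠ z := by
    intro h; apply hM.1 _ hyz; subst h; exact Sym2.mk_isDiag_iff.2 rfl
  have hsatz : Saturates M z := ⟨_, hyz, Sym2.mem_mk_right _ _⟩
  have hyE : ¬ Saturates (M.erase s(y, z)) y := by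
    rintro ⟨f, hf, hyf⟩
    exact (Finset.ne_of_mem_erase hf)
      (edge_eq_of_mem hM (Finset.mem_of_mem_erase hf) hyz hyf (Sym2.mem_mk_left _ _))
  have hzE : ¬ Saturates (M.erase s(y, z)) z := by
    rintro ⟨f, hf, hzf⟩
    exact (Finset.ne_of_mem_erase hf)
      (edge_eq_of_mem hM (Finset.mem_of_mem_erase hf) hyz hzf (Sym2.mem_mk_right _ _))
  have hxE : ¬ Saturates (M.erase s(y, z)) x := by
    rintro ⟨f, hf, hxf⟩
    exact hx ⟨f, Finset.mem_of_mem_erase hf, hxf⟩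
  have hEM : IsMatching w (M.erase s(y, z)) := isMatching_subset hM (Finset.erase_subset _ _)
  refine ⟨isMatching_insert hEM hxy h1 h2 hxE hyE, ?_⟩
  rw [matchWeight_eq_sum, matchWeight_eq_sum, satSet_insert]
  have hsatE : satSet (M.erase s(y, z)) = ((satSet M).erase z).erase y := by
    ext v
    simp only [mem_satSet, Finset.mem_erase]
    constructor
    · rintro ⟨f, hf, hvf⟩
      have hfM := Finset.mem_of_mem_erase hf
      have hfne := Finset.ne_of_mem_erase hf
      refine ⟨?_, ?_, ⟨f, hfM, hvf⟩⟩
      · rintro rfl; exact hfne (edge_eq_of_mem hM hfM hyz hvf (Sym2.mem_mk_left _ _))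
      · rintro rfl; exact hfne (edge_eq_of_mem hM hfM hyz hvf (Sym2.mem_mk_right _ _))
    · rintro ⟨hvy, hvz, f, hf, hvf⟩
      refine ⟨f, Finset.mem_erase_of_ne_of_mem ?_ hf, hvf⟩
      rintro rfl
      rcases Sym2.mem_iff.1 hvf with rfl | rfl
      · exact hvy rfl
      · exact hvz rfl
  rw [hsatE]
  have hzmem : z ∈ satSet M := mem_satSet.2 hsatz
  have hymem : y ∈ satSet M := mem_satSet.2 ⟨_, hyz, Sym2.mem_mk_left _ _⟩
  have hxmem : x ∉ satSet M := fun h => hx (mem_satSet.1 h)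
  have hyz2 : y ∈ (satSet M).erase z := Finset.mem_erase_of_ne_of_mem hyz' hymem
  rw [Finset.sum_insert, Finset.sum_insert]
  · have e1 : ∑ v ∈ ((satSet M).erase z).erase y, φ v + φ y = ∑ v ∈ (satSet M).erase z, φ v :=
      Finset.sum_erase_add _ _ hyz2
    have e2 : ∑ v ∈ (satSet M).erase z, φ v + φ z = ∑ v ∈ satSet M, φ v :=
      Finset.sum_erase_add _ _ hzmem
    omega
  · intro h
    rcases Finset.mem_erase.1 h with ⟨hne, h⟩
    exact hyE (mem_satSet.1 (by rw [hsatE]; exact Finset.mem_erase_of_ne_of_mem hne h))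
  · intro h
    rcases Finset.mem_insert.1 h with rfl | h
    · exact hxy rfl
    · rw [← hsatE] at h; exact hxE (mem_satSet.1 h)




lemma sym2_mem_left {x y : V} : x ∈ s(x, y) := Sym2.mem_mk_left _ _
lemma sym2_mem_right {x y : V} : y ∈ s(x, y) := Sym2.mem_mk_right _ _

/-- The exchange induction: walking the alternating path between an optimal matching `M'`
and a matching `Mstar` saturating all vertices of weight ≥ 5 leads to a contradiction when
a weight-5 vertex is exposed. -/
lemma exchange {w : V → V → ℕ} {φ : V → ℕ} {S : Finset V}
    {M Mstar : Finset (Sym2 V)}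
    (hM : IsMatching w M) (hMstar : IsMatching w Mstar)
    (hopt : ∀ M', IsMatching w M' → matchWeight φ M' ≤ matchWeight φ M)
    (h5S : ∀ v : V, 5 ≤ φ v → v ∈ S)
    (hSsat : ∀ s ∈ S, Saturates Mstar s) :
    ∀ (n : ℕ) (N : Finset (Sym2 V)), N.card ≤ n → N ⊆ Mstar →
      ∀ (M' : Finset (Sym2 V)) (x : V), IsMatching w M' → (Mstar \ N) ⊆ M' →
      Saturates N x → ¬ Saturates M' x →
      matchWeight φ M + 5 ≤ matchWeight φ M' + φ x → False := by
  intro n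
  induction n with
  | zero =>
    intro N hcard _ M' x _ _ hxN _ _
    rw [Nat.le_zero, Finset.card_eq_zero] at hcard
    obtain ⟨e, he, _⟩ := hxN
    simp [hcard] at he
  | succ n ih =>
    intro N hcard hNsub M' x hM' hdiff hxN hxM' hweight
    obtain ⟨y, hyx, hxyN, _⟩ := partner (isMatching_subset hMstar hNsub) hxN
    have hxyMs : s(x, y) ∈ Mstar := hNsub hxyN
    have h1 : 1 ≤ w x y := hMstar.2.1 x y hxyMs
    have h2 : 1 ≤ w y x := hMstar.2.1 y x (by rwa [Sym2.eq_swap])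
    by_cases hy : Saturates M' y
    · obtain ⟨z, hzy, hyzM', _⟩ := partner hM' hy
      have hxz : x ≠ z := fun h => hxM' (h ▸ ⟨_, hyzM', sym2_mem_right⟩)
      obtain ⟨hmatch'', hwt⟩ := swap_matching hM' hyzM' hxM' hxz h1 h2 φ
      set M'' := insert s(x, y) (M'.erase s(y, z)) with hM''def
      have hoptM'' := hopt M'' hmatch''
      have hz5 : 5 ≤ φ z := by omega
      have hzS : z ∈ S := h5S z hz5
      obtain ⟨u, huz, hzuMs, _⟩ := partner hMstar (hSsat z hzS)
      have hzxy : z ∉ s(x, y) := by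
        rw [Sym2.mem_iff]
        rintro (rfl | rfl)
        · exact hxz rfl
        · exact hzy rfl
      have hyz_ne_xy : s(y, z) ≠ s(x, y) := fun h => hzxy (h ▸ sym2_mem_right)
      have hyzMs : s(y, z) ∉ Mstar := by
        intro hmem
        have := edge_eq_of_mem hMstar hmem hxyMs (sym2_mem_left) (sym2_mem_right)
        exact hyz_ne_xy this
      have hzuN : s(z, u) ∈ N := by
        by_contra hnot
        have : s(z, u) ∈ Mstar \ N := Finset.mem_sdiff.2 ⟨hzuMs, hnot⟩
        have hmem' : s(z, u) ∈ M' := hdiff this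
        have : s(z, u) = s(y, z) :=
          edge_eq_of_mem hM' hmem' hyzM' sym2_mem_left sym2_mem_right
        exact hyzMs (this ▸ hzuMs)
      have hzu_ne : s(z, u) ≠ s(x, y) := fun h => hzxy (h ▸ sym2_mem_left)
      have hzuN' : s(z, u) ∈ N.erase s(x, y) := Finset.mem_erase_of_ne_of_mem hzu_ne hzuN
      have hzM'' : ¬ Saturates M'' z := by
        rintro ⟨f, hf, hzf⟩
        rcases Finset.mem_insert.1 hf with rfl | hf
        · exact hzxy hzf
        · exact (Finset.ne_of_mem_erase hf)
            (edge_eq_of_mem hM' (Finset.mem_of_mem_erase hf) hyzM' hzf sym2_mem_right)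
      refine ih (N.erase s(x, y)) ?_ (Finset.Subset.trans (Finset.erase_subset _ _) hNsub)
        M'' z hmatch'' ?_ ⟨_, hzuN', sym2_mem_left⟩ hzM'' (by omega)
      · have h1c : N.card ≤ n + 1 := hcard
        have h2c : (N.erase s(x, y)).card = N.card - 1 := Finset.card_erase_of_mem hxyN
        have h3c : 1 ≤ N.card := Finset.card_pos.2 ⟨_, hxyN⟩
        omega
      · intro h hh
        rcases Finset.mem_sdiff.1 hh with ⟨hhMs, hhN⟩
        by_cases hcase : h = s(x, y)
        · exact hcase ▸ Finset.mem_insert_self _ _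
        · have hhN' : h ∉ N := fun hmem =>
            hhN (Finset.mem_erase_of_ne_of_mem hcase hmem)
          have hhM' : h ∈ M' := hdiff (Finset.mem_sdiff.2 ⟨hhMs, hhN'⟩)
          have hne : h ≠ s(y, z) := fun h' => hyzMs (h' ▸ hhMs)
          exact Finset.mem_insert_of_mem (Finset.mem_erase_of_ne_of_mem hne hhM')
    · have hmm := isMatching_insert hM' hyx.symm h1 h2 hxM' hy
      have hwt := matchWeight_insert φ hyx.symm hxM' hy
      have := hopt _ hmm
      omega




noncomputable def nbr (w : V → V → ℕ) (v : V) : Finset V :=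
  Finset.univ.filter fun u => 1 ≤ w v u

lemma deg_le_maxDeg (w : V → V → ℕ) (v : V) : deg w v ≤ maxDeg w :=
  Finset.le_sup (Finset.mem_univ v)

lemma hall_injection {w : V → V → ℕ} (hsym : ∀ u v, w u v = w v u)
    (hloop : ∀ v, w v v = 0) (hΔ : 1 ≤ maxDeg w) (S : Finset V)
    (hS : ∀ s ∈ S, deg w s = maxDeg w) :
    ∃ F : V → V, (∀ a ∈ S, ∀ b ∈ S, F a = F b → a = b) ∧
      ∀ s ∈ S, 1 ≤ w s (F s) ∧ 1 ≤ w (F s) s ∧ s ≠ F s := by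
  have hall : ∀ A : Finset {v // v ∈ S},
      A.card ≤ (A.biUnion fun s => nbr w s.1).card := by
    intro A
    set B := A.biUnion fun s => nbr w s.1 with hB
    have key : maxDeg w * A.card ≤ maxDeg w * B.card := by
      calc maxDeg w * A.card = ∑ s ∈ A, deg w s.1 := by
            rw [Finset.sum_congr rfl fun s hs => hS s.1 s.2]
            simp [Finset.sum_const, Nat.mul_comm]
        _ = ∑ s ∈ A, ∑ u ∈ nbr w s.1, w s.1 u := by
            refine Finset.sum_congr rfl fun s _ => ?_
            rw [deg, nbr]
            refine (Finset.sum_filter_of_ne ?_).symm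
            intro u _ hne
            simpa [Nat.one_le_iff_ne_zero] using hne
        _ ≤ ∑ s ∈ A, ∑ u ∈ B, w s.1 u := by
            refine Finset.sum_le_sum fun s hs => ?_
            exact Finset.sum_le_sum_of_subset (Finset.subset_biUnion_of_mem (fun s : {v // v ∈ S} => nbr w s.1) hs)
        _ = ∑ u ∈ B, ∑ s ∈ A, w s.1 u := Finset.sum_comm
        _ ≤ ∑ u ∈ B, deg w u := by
            refine Finset.sum_le_sum fun u _ => ?_
            have h1 : ∑ s ∈ A, w s.1 u = ∑ v ∈ A.image (fun s => s.1), w v u := by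
              rw [Finset.sum_image]
              intro a _ b _ hab
              exact Subtype.ext hab
            rw [h1]
            have h2 : ∑ v ∈ A.image (fun s => s.1), w v u ≤ ∑ v : V, w v u :=
              Finset.sum_le_sum_of_subset (Finset.subset_univ _)
            have h3 : ∑ v : V, w v u = deg w u := by
              rw [deg]; exact Finset.sum_congr rfl fun v _ => hsym v u
            omega
        _ ≤ ∑ _u ∈ B, maxDeg w := Finset.sum_le_sum fun u _ => deg_le_maxDeg w u
        _ = maxDeg w * B.card := by simp [Finset.sum_const, Nat.mul_comm]
    exact Nat.le_of_mul_le_mul_left key hΔ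
  obtain ⟨f, hfinj, hf⟩ := (Finset.all_card_le_biUnion_card_iff_exists_injective
    (fun s : {v // v ∈ S} => nbr w s.1)).1 hall
  refine ⟨fun v => if h : v ∈ S then f ⟨v, h⟩ else v, ?_, ?_⟩
  · intro a ha b hb hab
    simp only [dif_pos ha, dif_pos hb] at hab
    have := hfinj hab
    exact congrArg Subtype.val this
  · intro s hs
    simp only [dif_pos hs]
    have := hf ⟨s, hs⟩
    rw [nbr, Finset.mem_filter] at this
    have h1 : 1 ≤ w s (f ⟨s, hs⟩) := this.2
    have h2 : 1 ≤ w (f ⟨s, hs⟩) s := by rw [hsym]; exact h1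
    refine ⟨h1, h2, ?_⟩
    intro he
    rw [← he, hloop] at h1
    omega




lemma saturates_union_left {A B : Finset (Sym2 V)} {v : V} (h : Saturates A v) :
    Saturates (A ∪ B) v := by
  obtain ⟨e, he, hv⟩ := h; exact ⟨e, Finset.mem_union_left _ he, hv⟩

lemma saturates_union_right {A B : Finset (Sym2 V)} {v : V} (h : Saturates B v) :
    Saturates (A ∪ B) v := by
  obtain ⟨e, he, hv⟩ := h; exact ⟨e, Finset.mem_union_right _ he, hv⟩

/-- Repair an injective "partner choice" into an honest matching saturating `S`. -/
lemma repair {w : V → V → ℕ} (σ : V → Bool) :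
    ∀ S : Finset V, ∀ F : V → V,
    (∀ a ∈ S, ∀ b ∈ S, F a = F b → a = b) →
    (∀ s ∈ S, 1 ≤ w s (F s) ∧ 1 ≤ w (F s) s ∧ s ≠ F s) →
    (∀ a ∈ S, ∀ b ∈ S, 1 ≤ w a b → σ a ≠ σ b) →
    ∃ Mstar : Finset (Sym2 V), IsMatching w Mstar ∧ (∀ s ∈ S, Saturates Mstar s) ∧
      ∀ e ∈ Mstar, ∀ v ∈ e, v ∈ S ∨ ∃ s ∈ S, F s = v := by
  intro S
  induction S using Finset.strongInduction with
  | _ S ih =>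
    intro F hinj hadj hbip
    by_cases hsurj : ∀ s ∈ S, ∃ t ∈ S, F t = s
    · -- `F` restricts to a bijection of `S`; use the 2-coloring to pick alternate edges.
      refine ⟨(S.filter fun s => σ s = true).image fun s => s(s, F s), ⟨?_, ?_, ?_⟩, ?_, ?_⟩
      · intro e he
        obtain ⟨a, ha, rfl⟩ := Finset.mem_image.1 he
        have haS := (Finset.mem_filter.1 ha).1
        simpa [Sym2.mk_isDiag_iff] using (hadj a haS).2.2
      · intro u v huv
        obtain ⟨a, ha, hae⟩ := Finset.mem_image.1 huv
        have haS := (Finset.mem_filter.1 ha).1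
        rcases Sym2.eq_iff.1 hae with ⟨h1, h2⟩ | ⟨h1, h2⟩
        · rw [← h1, ← h2]; exact (hadj a haS).1
        · rw [← h1, ← h2]; exact (hadj a haS).2.1
      · intro e he f hf hef x hxe hxf
        obtain ⟨a, ha, rfl⟩ := Finset.mem_image.1 he
        obtain ⟨b, hb, rfl⟩ := Finset.mem_image.1 hf
        have haS := (Finset.mem_filter.1 ha).1
        have hbS := (Finset.mem_filter.1 hb).1
        have haT := (Finset.mem_filter.1 ha).2
        have hbT := (Finset.mem_filter.1 hb).2
        rcases Sym2.mem_iff.1 hxe with h1 | h1 <;> rcases Sym2.mem_iff.1 hxf with h2 | h2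
        · exact hef (by rw [h1.symm.trans h2])
        · have hab : a = F b := h1.symm.trans h2
          have hw : 1 ≤ w b a := by rw [hab]; exact (hadj b hbS).1
          have := hbip b hbS a haS hw
          rw [haT, hbT] at this; exact this rfl
        · have hab : F a = b := h1.symm.trans h2
          have hw : 1 ≤ w a (F a) := (hadj a haS).1
          have := hbip a haS (F a) (by rw [hab]; exact hbS) hw
          rw [haT] at this
          have hb2 : σ (F a) = true := by rw [hab]; exact hbT
          exact this hb2.symm
        · have : a = b := hinj a haS b hbS (h1.symm.trans h2)
          exact hef (by rw [this])
      · intro s hs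
        by_cases hσ : σ s = true
        · exact ⟨s(s, F s), Finset.mem_image_of_mem _ (Finset.mem_filter.2 ⟨hs, hσ⟩),
            Sym2.mem_mk_left _ _⟩
        · obtain ⟨t, htS, htF⟩ := hsurj s hs
          have hw : 1 ≤ w t s := by rw [← htF]; exact (hadj t htS).1
          have hne := hbip t htS s hs hw
          have hσs : σ s = false := by
            revert hσ; cases σ s <;> simp
          have hσt : σ t = true := by
            cases h : σ t
            · exact absurd (h.trans hσs.symm) hne
            · rfl
          refine ⟨s(t, F t), Finset.mem_image_of_mem _ (Finset.mem_filter.2 ⟨htS, hσt⟩), ?_⟩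
          rw [htF]; exact Sym2.mem_mk_right _ _
      · intro e he v hv
        obtain ⟨a, ha, rfl⟩ := Finset.mem_image.1 he
        have haS := (Finset.mem_filter.1 ha).1
        rcases Sym2.mem_iff.1 hv with rfl | rfl
        · exact Or.inl haS
        · exact Or.inr ⟨a, haS, rfl⟩
    · -- there is a chain head `a₁`
      push_neg at hsurj
      obtain ⟨a₁, ha₁S, hhead⟩ := hsurj
      have hex : ∃ n, F^[n] a₁ ∉ S := by
        by_contra hall
        push_neg at hall
        have hdist : ∀ i j, i < j → F^[i] a₁ ≠ F^[j] a₁ := by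
          intro i
          induction i with
          | zero =>
            intro j hj heq
            obtain ⟨m, rfl⟩ : ∃ m, j = m + 1 := ⟨j - 1, by omega⟩
            rw [Function.iterate_succ_apply'] at heq
            exact hhead (F^[m] a₁) (hall m) heq.symm
          | succ i ihi =>
            intro j hj heq
            obtain ⟨m, rfl⟩ : ∃ m, j = m + 1 := ⟨j - 1, by omega⟩
            rw [Function.iterate_succ_apply', Function.iterate_succ_apply'] at heq
            exact ihi m (by omega) (hinj _ (hall i) _ (hall m) heq)
        obtain ⟨i, j, hne, heq⟩ :=
          Finite.exists_ne_map_eq_of_infinite (fun n : ℕ => F^[n] a₁)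
        rcases lt_trichotomy i j with h | h | h
        · exact hdist i j h heq
        · exact hne h
        · exact hdist j i h heq.symm
      set k := Nat.find hex with hkdef
      have hkout : F^[k] a₁ ∉ S := Nat.find_spec hex
      have hkS : ∀ i, i < k → F^[i] a₁ ∈ S := by
        intro i hi
        by_contra hc
        exact Nat.find_min hex hi hc
      have hkpos : 0 < k := by
        rcases Nat.eq_zero_or_pos k with h | h
        · exfalso; apply hkout; rw [h]; simpa using ha₁S
        · exact h
      have hdist : ∀ i j, i < j → j ≤ k → F^[i] a₁ ≠ F^[j] a₁ := by
        intro i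
        induction i with
        | zero =>
          intro j hj hjk heq
          obtain ⟨m, rfl⟩ : ∃ m, j = m + 1 := ⟨j - 1, by omega⟩
          rw [Function.iterate_succ_apply'] at heq
          exact hhead (F^[m] a₁) (hkS m (by omega)) heq.symm
        | succ i ihi =>
          intro j hj hjk heq
          obtain ⟨m, rfl⟩ : ∃ m, j = m + 1 := ⟨j - 1, by omega⟩
          rw [Function.iterate_succ_apply', Function.iterate_succ_apply'] at heq
          exact ihi m (by omega) (by omega)
            (hinj _ (hkS i (by omega)) _ (hkS m (by omega)) heq)
      set C := (Finset.range k).image (fun i => F^[i] a₁) with hCdef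
      have ha₁C : a₁ ∈ C := by
        rw [hCdef]
        exact Finset.mem_image.2 ⟨0, Finset.mem_range.2 hkpos, rfl⟩
      set S' := S \ C with hS'def
      have hS'ss : S' ⊂ S := by
        refine Finset.ssubset_iff_of_subset (Finset.sdiff_subset) |>.2 ⟨a₁, ha₁S, ?_⟩
        intro hmem
        exact (Finset.mem_sdiff.1 hmem).2 ha₁C
      have hS'sub : S' ⊆ S := Finset.sdiff_subset
      obtain ⟨M', hm', hsat', hbound'⟩ := ih S' hS'ss F
        (fun a ha b hb => hinj a (hS'sub ha) b (hS'sub hb))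
        (fun s hs => hadj s (hS'sub hs))
        (fun a ha b hb => hbip a (hS'sub ha) b (hS'sub hb))
      set MC := (Finset.range ((k+1)/2)).image
        (fun i => s(F^[2*i] a₁, F^[2*i+1] a₁)) with hMCdef
      have hMCvert : ∀ e ∈ MC, ∀ v ∈ e, ∃ m, m ≤ k ∧ v = F^[m] a₁ := by
        intro e he v hv
        obtain ⟨i, hi, rfl⟩ := Finset.mem_image.1 he
        rw [Finset.mem_range] at hi
        rcases Sym2.mem_iff.1 hv with rfl | rfl
        · exact ⟨2*i, by omega, rfl⟩
        · exact ⟨2*i+1, by omega, rfl⟩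
      have hcross : ∀ m, m ≤ k → ∀ f ∈ M', F^[m] a₁ ∉ f := by
        intro m hm f hf hvf
        rcases hbound' f hf _ hvf with hvS' | ⟨s', hs'S', hFs'⟩
        · rcases Nat.lt_or_ge m k with hmk | hmk
          · have : F^[m] a₁ ∈ C := Finset.mem_image.2 ⟨m, Finset.mem_range.2 hmk, rfl⟩
            rw [hS'def] at hvS'
            exact (Finset.mem_sdiff.1 hvS').2 this
          · have : m = k := by omega
            exact hkout (this ▸ (hS'sub hvS'))
        · rcases Nat.eq_zero_or_pos m with rfl | hmpos
          · exact hhead s' (hS'sub hs'S') (by simpa using hFs')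
          · obtain ⟨m', rfl⟩ : ∃ m', m = m' + 1 := ⟨m - 1, by omega⟩
            rw [Function.iterate_succ_apply'] at hFs'
            have : s' = F^[m'] a₁ :=
              hinj s' (hS'sub hs'S') _ (hkS m' (by omega)) hFs'
            have hC : F^[m'] a₁ ∈ C :=
              Finset.mem_image.2 ⟨m', Finset.mem_range.2 (by omega), rfl⟩
            rw [hS'def] at hs'S'
            exact (Finset.mem_sdiff.1 hs'S').2 (this ▸ hC)
      have hFtoIt : ∀ i, F^[i+1] a₁ = F (F^[i] a₁) := fun i =>
        Function.iterate_succ_apply' F i a₁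
      have hItm : ∀ m m', m < m' → m' ≤ k → F^[m] a₁ ≠ F^[m'] a₁ := hdist
      refine ⟨MC ∪ M', ⟨?_, ?_, ?_⟩, ?_, ?_⟩
      · intro e he
        rcases Finset.mem_union.1 he with he | he
        · obtain ⟨i, hi, rfl⟩ := Finset.mem_image.1 he
          rw [Finset.mem_range] at hi
          have h2i : 2*i < k := by omega
          have := (hadj _ (hkS _ h2i)).2.2
          rw [← hFtoIt (2*i)] at this
          simpa [Sym2.mk_isDiag_iff] using this
        · exact hm'.1 e he
      · intro u v huv
        rcases Finset.mem_union.1 huv with he | he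
        · obtain ⟨i, hi, hae⟩ := Finset.mem_image.1 he
          rw [Finset.mem_range] at hi
          have h2i : 2*i < k := by omega
          have h1 := (hadj _ (hkS _ h2i)).1
          have h2 := (hadj _ (hkS _ h2i)).2.1
          rw [← hFtoIt (2*i)] at h1 h2
          rcases Sym2.eq_iff.1 hae with ⟨h3, h4⟩ | ⟨h3, h4⟩
          · rw [← h3, ← h4]; exact h1
          · rw [← h3, ← h4]; exact h2
        · exact hm'.2.1 u v he
      · intro e he f hf hef x hxe hxf
        rcases Finset.mem_union.1 he with he' | he' <;>
          rcases Finset.mem_union.1 hf with hf' | hf'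
        · obtain ⟨i, hi, rfl⟩ := Finset.mem_image.1 he'
          obtain ⟨j, hj, rfl⟩ := Finset.mem_image.1 hf'
          rw [Finset.mem_range] at hi hj
          have hItEq : ∀ m m', m ≤ k → m' ≤ k → F^[m] a₁ = F^[m'] a₁ → m = m' := by
            intro m m' hm hm' heq
            rcases lt_trichotomy m m' with h | h | h
            · exact absurd heq (hdist m m' h hm')
            · exact h
            · exact absurd heq.symm (hdist m' m h hm)
          rcases Sym2.mem_iff.1 hxe with h1 | h1 <;> rcases Sym2.mem_iff.1 hxf with h2 | h2
          · have hmm := hItEq _ _ (by omega) (by omega) (h1.symm.trans h2)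
            have : i = j := by omega
            subst this; exact hef rfl
          · have hmm := hItEq _ _ (by omega) (by omega) (h1.symm.trans h2)
            omega
          · have hmm := hItEq _ _ (by omega) (by omega) (h1.symm.trans h2)
            omega
          · have hmm := hItEq _ _ (by omega) (by omega) (h1.symm.trans h2)
            have : i = j := by omega
            subst this; exact hef rfl
        · obtain ⟨m, hm, rfl⟩ := hMCvert e he' x hxe
          exact hcross m hm f hf' hxf
        · obtain ⟨m, hm, rfl⟩ := hMCvert f hf' x hxf
          exact hcross m hm e he' hxe
        · exact hm'.2.2 e he' f hf' hef x hxe hxf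
      · intro s hs
        by_cases hsC : s ∈ C
        · obtain ⟨j, hj, rfl⟩ := Finset.mem_image.1 hsC
          rw [Finset.mem_range] at hj
          rcases Nat.even_or_odd j with ⟨i, hij⟩ | ⟨i, hij⟩
          · refine saturates_union_left ⟨s(F^[2*i] a₁, F^[2*i+1] a₁),
              Finset.mem_image.2 ⟨i, Finset.mem_range.2 (by omega), rfl⟩, ?_⟩
            rw [hij]
            have : j = 2*i := by omega
            rw [← hij, this]
            exact Sym2.mem_mk_left _ _
          · refine saturates_union_left ⟨s(F^[2*i] a₁, F^[2*i+1] a₁),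
              Finset.mem_image.2 ⟨i, Finset.mem_range.2 (by omega), rfl⟩, ?_⟩
            have : j = 2*i+1 := by omega
            rw [this]
            exact Sym2.mem_mk_right _ _
        · exact saturates_union_right (hsat' s (Finset.mem_sdiff.2 ⟨hs, hsC⟩))
      · intro e he v hv
        rcases Finset.mem_union.1 he with he' | he'
        · obtain ⟨m, hm, rfl⟩ := hMCvert e he' v hv
          rcases Nat.eq_zero_or_pos m with rfl | hmpos
          · exact Or.inl (by simpa using ha₁S)
          · obtain ⟨m', rfl⟩ : ∃ m', m = m' + 1 := ⟨m - 1, by omega⟩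
            exact Or.inr ⟨F^[m'] a₁, hkS m' (by omega), (hFtoIt m').symm⟩
        · rcases hbound' e he' v hv with h | ⟨s', hs', hF⟩
          · exact Or.inl (hS'sub h)
          · exact Or.inr ⟨s', hS'sub hs', hF⟩




/-- Main single-slot lemma: if every vertex of weight ≥ 5 is critical, and the weight-5
class carries a proper 2-coloring, then any weight-optimal matching saturates the class. -/
lemma saturates_of_optimal {w : V → V → ℕ} (hsym : ∀ u v, w u v = w v u)
    (hloop : ∀ v, w v v = 0) (hΔ : 1 ≤ maxDeg w)
    (S : Finset V) (σ : V → Bool)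
    (hcrit : ∀ s ∈ S, deg w s = maxDeg w)
    (hbip : ∀ a ∈ S, ∀ b ∈ S, 1 ≤ w a b → σ a ≠ σ b)
    (φ : V → ℕ) (h5S : ∀ v, 5 ≤ φ v → v ∈ S) (hS5 : ∀ s ∈ S, 5 ≤ φ s)
    {M : Finset (Sym2 V)} (hM : IsMatching w M)
    (hopt : ∀ M', IsMatching w M' → matchWeight φ M' ≤ matchWeight φ M) :
    ∀ s ∈ S, Saturates M s := by
  obtain ⟨F, hinj, hadj⟩ := hall_injection hsym hloop hΔ S hcrit
  obtain ⟨Mstar, hMs, hsat, _⟩ := repair σ S F hinj hadj hbip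
  intro s hs
  by_contra hnot
  refine exchange hM hMs hopt h5S hsat Mstar.card Mstar le_rfl (Finset.Subset.refl _)
    M s hM ?_ (hsat s hs) hnot ?_
  · rw [Finset.sdiff_self]
    exact Finset.empty_subset _
  · have := hS5 s hs
    omega

-- ### run-level facts

section Run

variable {w0 : V → V → ℕ} (run : LCNSBRun w0)

lemma G_symm (hsymm : ∀ u v, w0 u v = w0 v u) :
    ∀ k u v, run.G k u v = run.G k v u := by
  intro k
  induction k with
  | zero => intro u v; rw [run.init]; exact hsymm u v
  | succ k ihk =>
    intro u v
    rw [run.step k]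
    unfold removeMatching
    rw [ihk u v, Sym2.eq_swap]

lemma G_loopless (hloop : ∀ v, w0 v v = 0) : ∀ k v, run.G k v v = 0 := by
  intro k
  induction k with
  | zero => intro v; rw [run.init]; exact hloop v
  | succ k ihk =>
    intro v
    rw [run.step k]
    unfold removeMatching
    split <;> simp [ihk v]

lemma G_le (k : ℕ) (u v : V) : run.G (k + 1) u v ≤ run.G k u v := by
  rw [run.step k]; unfold removeMatching; split <;> omega

lemma deg_succ (k : ℕ) (v : V) :
    deg (run.G (k + 1)) v + (if Saturates (run.M k) v then 1 else 0) = deg (run.G k) v := by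
  have hM := run.matching k
  have hcount : ∑ u, (if s(v, u) ∈ run.M k then 1 else 0) =
      (if Saturates (run.M k) v then 1 else 0) := by
    by_cases hsat : Saturates (run.M k) v
    · obtain ⟨u₀, hu₀ne, hu₀, huniq⟩ := partner hM hsat
      rw [if_pos hsat]
      have hiff : ∀ u, (s(v, u) ∈ run.M k) ↔ u = u₀ := by
        intro u
        constructor
        · intro hmem
          have := huniq _ hmem (Sym2.mem_mk_left _ _)
          exact (Sym2.congr_right).1 this
        · rintro rfl; exact hu₀
      calc ∑ u, (if s(v, u) ∈ run.M k then 1 else 0)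
          = ∑ u, (if u = u₀ then 1 else 0) :=
            Finset.sum_congr rfl fun u _ => by rw [if_congr (hiff u) rfl rfl]
        _ = 1 := by simp
    · rw [if_neg hsat]
      refine Finset.sum_eq_zero fun u _ => ?_
      rw [if_neg]
      intro hmem
      exact hsat ⟨_, hmem, Sym2.mem_mk_left _ _⟩
  rw [← hcount]
  rw [deg, deg, ← Finset.sum_add_distrib]
  refine Finset.sum_congr rfl fun u _ => ?_
  rw [run.step k]
  unfold removeMatching
  by_cases hmem : s(v, u) ∈ run.M k
  · have h1 : 1 ≤ run.G k v u := hM.2.1 v u hmem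
    rw [if_pos hmem, if_pos hmem]; omega
  · rw [if_neg hmem, if_neg hmem]; omega

lemma deg_mono (k : ℕ) (v : V) : deg (run.G (k + 1)) v ≤ deg (run.G k) v := by
  have := deg_succ run k v; omega

lemma maxDeg_mono (k : ℕ) : maxDeg (run.G (k + 1)) ≤ maxDeg (run.G k) :=
  Finset.sup_le fun v _ => le_trans (deg_mono run k v) (deg_le_maxDeg _ v)

lemma maxDeg_succ_ge [Nonempty V] (k : ℕ) :
    maxDeg (run.G k) ≤ maxDeg (run.G (k + 1)) + 1 := by
  obtain ⟨v, _, hv⟩ := Finset.exists_mem_eq_sup (Finset.univ : Finset V)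
    Finset.univ_nonempty (fun v => deg (run.G k) v)
  have h1 := deg_succ run k v
  have h2 := deg_le_maxDeg (run.G (k + 1)) v
  have h3 : maxDeg (run.G k) = deg (run.G k) v := hv
  split at h1 <;> omega

lemma Rfun_le_one (M : ℕ → Finset (Sym2 V)) (k : ℕ) (i : V) : Rfun M k i ≤ 1 := by
  unfold Rfun; split <;> omega

lemma Ufun_le_one (M : ℕ → Finset (Sym2 V)) (k : ℕ) (i : V) : Ufun M k i ≤ 1 := by
  unfold Ufun
  have h1 := Rfun_le_one M (k - 1) i
  have h2 := Rfun_le_one M (k - 2) i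
  split
  · omega
  · split
    · simpa using Nat.mul_le_mul h1 h2
    · exact h1

lemma lcnsb_ge_one (w : V → V → ℕ) (u : V → ℕ) (i : V) (hu : u i ≤ 1) :
    1 ≤ lcnsbWeight w u i := by
  unfold lcnsbWeight; split
  · omega
  · split <;> omega

lemma five_le_lcnsb_iff (w : V → V → ℕ) (u : V → ℕ) (i : V) (hu : u i ≤ 1) :
    5 ≤ lcnsbWeight w u i ↔ (Critical w i ∧ u i = 0) := by
  unfold lcnsbWeight
  split_ifs with h1 h2
  · constructor
    · intro h; exact ⟨h1, by omega⟩
    · rintro ⟨_, h⟩; omega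
  · constructor
    · intro h; omega
    · rintro ⟨hc, _⟩; exact absurd hc h1
  · constructor
    · intro h; omega
    · rintro ⟨hc, _⟩; exact absurd hc h1

lemma Ufun_t1 (M : ℕ → Finset (Sym2 V)) (k' : ℕ) (i : V) :
    Ufun M (3 * k' + 1) i = Rfun M (3 * k') i := by
  unfold Ufun
  rw [if_neg (by omega), if_neg (by omega)]
  have h : 3 * k' + 1 - 1 = 3 * k' := by omega
  rw [h]

lemma Ufun_t2 (M : ℕ → Finset (Sym2 V)) (k' : ℕ) (i : V) :
    Ufun M (3 * k' + 2) i = Rfun M (3 * k' + 1) i * Rfun M (3 * k') i := by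
  unfold Ufun
  rw [if_neg (by omega), if_pos (by omega)]
  have h1 : 3 * k' + 2 - 1 = 3 * k' + 1 := by omega
  have h2 : 3 * k' + 2 - 2 = 3 * k' := by omega
  rw [h1, h2]

lemma Rfun_eq_zero_iff (M : ℕ → Finset (Sym2 V)) (k : ℕ) (i : V) :
    Rfun M k i = 0 ↔ ¬ Saturates (M k) i := by
  unfold Rfun; split <;> simp_all

/-- No two exposed vertices of `M k` are adjacent in `G k`. -/
lemma no_two_exposed (hsymm : ∀ u v, w0 u v = w0 v u) (k : ℕ) {a b : V} (hne : a ≠ b)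
    (hw : 1 ≤ run.G k a b) (ha : ¬ Saturates (run.M k) a) (hb : ¬ Saturates (run.M k) b) :
    False := by
  have hM := run.matching k
  have hwsym : 1 ≤ run.G k b a := by rw [G_symm run hsymm k b a]; exact hw
  have hins := isMatching_insert hM hne hw hwsym ha hb
  have hle := run.opt k _ hins
  rw [matchWeight_insert _ hne ha hb] at hle
  have h1 : 1 ≤ lcnsbWeight (run.G k) (Ufun run.M k) a :=
    lcnsb_ge_one _ _ _ (Ufun_le_one _ _ _)
  omega

end Run


end AuxLemmas

/-- In any LC-NSB evacuation run, if `Δ(3k′) ≥ 2` then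
`Δ(3k′ + 3) ≤ Δ(3k′) − 2`. -/
theorem lcnsb_frame_decrease {V : Type} [Fintype V] [DecidableEq V]
    (w0 : V → V → ℕ) (hsymm : ∀ u v, w0 u v = w0 v u) (hloop : ∀ v, w0 v v = 0)
    (hn : 2 ≤ Fintype.card V)
    (run : LCNSBRun w0) (k' : ℕ)
    (h : 2 ≤ maxDeg (run.G (3 * k'))) :
    maxDeg (run.G (3 * k' + 3)) ≤ maxDeg (run.G (3 * k')) - 2 := by
  haveI : Nonempty V := Fintype.card_pos_iff.mp (by omega)
  have hsymG := G_symm run hsymm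
  have hloopG := G_loopless run hloop
  set Δ0 := maxDeg (run.G (3 * k')) with hΔ0def
  have hm1le : maxDeg (run.G (3 * k' + 1)) ≤ Δ0 := maxDeg_mono run (3 * k')
  have hm1ge : Δ0 ≤ maxDeg (run.G (3 * k' + 1)) + 1 := maxDeg_succ_ge run (3 * k')
  have e12 : 3 * k' + 1 + 1 = 3 * k' + 2 := by omega
  have e23 : 3 * k' + 2 + 1 = 3 * k' + 3 := by omega
  set S1 := Finset.univ.filter (fun v : V => deg (run.G (3 * k' + 1)) v =
    maxDeg (run.G (3 * k' + 1)) ∧ ¬ Saturates (run.M (3 * k')) v) with hS1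
  have hS1mem : ∀ v : V, v ∈ S1 ↔ (deg (run.G (3 * k' + 1)) v =
      maxDeg (run.G (3 * k' + 1)) ∧ ¬ Saturates (run.M (3 * k')) v) := by
    intro v; rw [hS1]; simp
  have hA : ∀ s ∈ S1, Saturates (run.M (3 * k' + 1)) s := by
    refine saturates_of_optimal (hsymG (3 * k' + 1)) (hloopG (3 * k' + 1)) (by omega)
      S1 (fun _ => true) ?_ ?_
      (lcnsbWeight (run.G (3 * k' + 1)) (Ufun run.M (3 * k' + 1))) ?_ ?_
      (run.matching (3 * k' + 1)) (run.opt (3 * k' + 1))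
    · intro s hs; exact ((hS1mem s).1 hs).1
    · intro a ha b hb hwab
      exfalso
      have hane : a ≠ b := by rintro rfl; rw [hloopG _ a] at hwab; omega
      have hw0 : 1 ≤ run.G (3 * k') a b := le_trans hwab (G_le run (3 * k') a b)
      exact no_two_exposed run hsymm (3 * k') hane hw0 ((hS1mem a).1 ha).2 ((hS1mem b).1 hb).2
    · intro v hv
      rw [five_le_lcnsb_iff _ _ _ (Ufun_le_one _ _ _)] at hv
      obtain ⟨hc, hu⟩ := hv
      rw [Ufun_t1 run.M k' v, Rfun_eq_zero_iff] at hu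
      exact (hS1mem v).2 ⟨hc, hu⟩
    · intro s hs
      rw [five_le_lcnsb_iff _ _ _ (Ufun_le_one _ _ _)]
      refine ⟨((hS1mem s).1 hs).1, ?_⟩
      rw [Ufun_t1 run.M k' s, Rfun_eq_zero_iff]
      exact ((hS1mem s).1 hs).2
  have hB : ∀ v : V, deg (run.G (3 * k' + 2)) v + 1 ≤ Δ0 := by
    intro v
    have hstep1 := deg_succ run (3 * k') v
    have hstep2 := deg_succ run (3 * k' + 1) v
    rw [e12] at hstep2
    have hd0 : deg (run.G (3 * k')) v ≤ Δ0 := deg_le_maxDeg _ v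
    by_cases hsat0 : Saturates (run.M (3 * k')) v
    · rw [if_pos hsat0] at hstep1
      split at hstep2 <;> omega
    · rw [if_neg hsat0] at hstep1
      by_cases hcrit : deg (run.G (3 * k')) v = Δ0
      · have hc1 : deg (run.G (3 * k' + 1)) v = maxDeg (run.G (3 * k' + 1)) :=
          le_antisymm (deg_le_maxDeg _ v) (by omega)
        have hsat1 : Saturates (run.M (3 * k' + 1)) v := hA v ((hS1mem v).2 ⟨hc1, hsat0⟩)
        rw [if_pos hsat1] at hstep2
        omega
      · split at hstep2 <;> omega
  refine Finset.sup_le fun v _ => ?_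
  by_contra hbad
  push_neg at hbad
  have hstep3 := deg_succ run (3 * k' + 2) v
  rw [e23] at hstep3
  have hBv := hB v
  have hd3le : deg (run.G (3 * k' + 3)) v ≤ deg (run.G (3 * k' + 2)) v := by
    split at hstep3 <;> omega
  have hd2 : deg (run.G (3 * k' + 2)) v = Δ0 - 1 := by omega
  have hsat2 : ¬ Saturates (run.M (3 * k' + 2)) v := by
    intro hs; rw [if_pos hs] at hstep3; omega
  have hm2 : maxDeg (run.G (3 * k' + 2)) = Δ0 - 1 := by
    have hle : maxDeg (run.G (3 * k' + 2)) ≤ Δ0 - 1 :=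
      Finset.sup_le fun u _ => by have := hB u; omega
    have hge := deg_le_maxDeg (run.G (3 * k' + 2)) v
    omega
  have hstep1 := deg_succ run (3 * k') v
  have hstep2 := deg_succ run (3 * k' + 1) v
  rw [e12] at hstep2
  have hnotboth : ¬ Saturates (run.M (3 * k')) v ∨ ¬ Saturates (run.M (3 * k' + 1)) v := by
    by_contra hc
    push_neg at hc
    rw [if_pos hc.1] at hstep1
    rw [if_pos hc.2] at hstep2
    have := deg_le_maxDeg (run.G (3 * k')) v
    omega
  set S2 := Finset.univ.filter (fun u : V => deg (run.G (3 * k' + 2)) u =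
    maxDeg (run.G (3 * k' + 2)) ∧
    (¬ Saturates (run.M (3 * k')) u ∨ ¬ Saturates (run.M (3 * k' + 1)) u)) with hS2
  have hS2mem : ∀ u : V, u ∈ S2 ↔ (deg (run.G (3 * k' + 2)) u =
      maxDeg (run.G (3 * k' + 2)) ∧
      (¬ Saturates (run.M (3 * k')) u ∨ ¬ Saturates (run.M (3 * k' + 1)) u)) := by
    intro u; rw [hS2]; simp
  have hC : ∀ s ∈ S2, Saturates (run.M (3 * k' + 2)) s := by
    refine saturates_of_optimal (hsymG (3 * k' + 2)) (hloopG (3 * k' + 2)) (by omega)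
      S2 (fun u => if Saturates (run.M (3 * k')) u then false else true) ?_ ?_
      (lcnsbWeight (run.G (3 * k' + 2)) (Ufun run.M (3 * k' + 2))) ?_ ?_
      (run.matching (3 * k' + 2)) (run.opt (3 * k' + 2))
    · intro s hs; exact ((hS2mem s).1 hs).1
    · intro a ha b hb hwab
      have hane : a ≠ b := by rintro rfl; rw [hloopG _ a] at hwab; omega
      have hw1 : 1 ≤ run.G (3 * k' + 1) a b := by
        have hle := G_le run (3 * k' + 1) a b
        rw [e12] at hle
        omega
      have hw0 : 1 ≤ run.G (3 * k') a b := le_trans hw1 (G_le run (3 * k') a b)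
      by_cases hsa : Saturates (run.M (3 * k')) a <;>
        by_cases hsb : Saturates (run.M (3 * k')) b
      · exfalso
        have hua : ¬ Saturates (run.M (3 * k' + 1)) a := by
          rcases ((hS2mem a).1 ha).2 with h' | h'
          · exact absurd hsa h'
          · exact h'
        have hub : ¬ Saturates (run.M (3 * k' + 1)) b := by
          rcases ((hS2mem b).1 hb).2 with h' | h'
          · exact absurd hsb h'
          · exact h'
        exact no_two_exposed run hsymm (3 * k' + 1) hane hw1 hua hub
      · show (if Saturates (run.M (3 * k')) a then false else true) ≠
          (if Saturates (run.M (3 * k')) b then false else true)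
        rw [if_pos hsa, if_neg hsb]; simp
      · show (if Saturates (run.M (3 * k')) a then false else true) ≠
          (if Saturates (run.M (3 * k')) b then false else true)
        rw [if_neg hsa, if_pos hsb]; simp
      · exfalso
        exact no_two_exposed run hsymm (3 * k') hane hw0 hsa hsb
    · intro u hu
      rw [five_le_lcnsb_iff _ _ _ (Ufun_le_one _ _ _)] at hu
      obtain ⟨hc, hu⟩ := hu
      rw [Ufun_t2 run.M k' u, Nat.mul_eq_zero] at hu
      refine (hS2mem u).2 ⟨hc, ?_⟩
      rcases hu with h' | h' <;> rw [Rfun_eq_zero_iff] at h'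
      · exact Or.inr h'
      · exact Or.inl h'
    · intro s hs
      rw [five_le_lcnsb_iff _ _ _ (Ufun_le_one _ _ _)]
      refine ⟨((hS2mem s).1 hs).1, ?_⟩
      rw [Ufun_t2 run.M k' s, Nat.mul_eq_zero]
      rcases ((hS2mem s).1 hs).2 with h' | h'
      · exact Or.inr ((Rfun_eq_zero_iff _ _ _).2 h')
      · exact Or.inl ((Rfun_eq_zero_iff _ _ _).2 h')
  refine hsat2 (hC v ((hS2mem v).2 ⟨?_, hnotboth⟩))
  rw [hm2, hd2]

end NSBPaper
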